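/- For every integer n ≥ 1, the number of DU-equivalence classes of ballot paths of length n equals f_n, the n-th Fibonacci number. -/

import Mathlib

/-- A path is a list of steps: `true` is an up-step U, `false` is a down-step D. -/
abbrev Step := Bool

/-- The height of the `j`-th lattice point of the path `p`. -/
def pathHeight (p : List Bool) (j : ℕ) : ℤ :=
  ((p.take j).count true : ℤ) - ((p.take j).count false : ℤ)

/-- A ballot path: every prefix has at least as many U's as D's. -/
def IsBallot (p : List Bool) : Prop :=
  ∀ k : ℕ, (p.take k).count false ≤ (p.take k).count true

/-- A Dyck path: a ballot path with equally many U's and D's. -/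
def IsDyck (p : List Bool) : Prop :=
  IsBallot p ∧ p.count true = p.count false

/-- The string `τ` occurs at (0-indexed) position `i` of the path `p`. -/
def OccursAt (τ p : List Bool) (i : ℕ) : Prop :=
  (p.drop i).take τ.length = τ

/-- Two paths are `τ`-equivalent: same length and occurrences of `τ` at the same positions. -/
def PathEquiv (τ p q : List Bool) : Prop :=
  p.length = q.length ∧ ∀ i : ℕ, OccursAt τ p i ↔ OccursAt τ q i

/-- The setoid of `τ`-equivalence on ballot paths of length `n`. -/
def ballotSetoid (τ : List Bool) (n : ℕ) :
    Setoid {p : List Bool // IsBallot p ∧ p.length = n} where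
  r p q := PathEquiv τ p.1 q.1
  iseqv := ⟨fun _ => ⟨rfl, fun _ => Iff.rfl⟩,
            fun h => ⟨h.1.symm, fun i => (h.2 i).symm⟩,
            fun h1 h2 => ⟨h1.1.trans h2.1, fun i => (h1.2 i).trans (h2.2 i)⟩⟩

/-- The number of `τ`-equivalence classes of ballot paths of length `n`. -/
noncomputable def numBallotClasses (τ : List Bool) (n : ℕ) : ℕ :=
  Nat.card (Quotient (ballotSetoid τ n))

/-- The setoid of `τ`-equivalence on Dyck paths of semilength `n`. -/
def dyckSetoid (τ : List Bool) (n : ℕ) :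
    Setoid {p : List Bool // IsDyck p ∧ p.length = 2 * n} where
  r p q := PathEquiv τ p.1 q.1
  iseqv := ⟨fun _ => ⟨rfl, fun _ => Iff.rfl⟩,
            fun h => ⟨h.1.symm, fun i => (h.2 i).symm⟩,
            fun h1 h2 => ⟨h1.1.trans h2.1, fun i => (h1.2 i).trans (h2.2 i)⟩⟩

/-- The number of `τ`-equivalence classes of Dyck paths of semilength `n`. -/
noncomputable def numDyckClasses (τ : List Bool) (n : ℕ) : ℕ :=
  Nat.card (Quotient (dyckSetoid τ n))

section DUAux

/-- Canonicalization: replace each letter by `true` except at DU-occurrence positions. -/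
def canon (p : List Bool) : List Bool :=
  (List.range p.length).map fun i => !decide (p[i]? = some false ∧ p[i+1]? = some true)

lemma canon_length (p : List Bool) : (canon p).length = p.length := by simp [canon]

lemma canon_getElem? (p : List Bool) (i : ℕ) (h : i < p.length) :
    (canon p)[i]? = some (!decide (p[i]? = some false ∧ p[i+1]? = some true)) := by
  simp [canon, List.getElem?_map, List.getElem?_range, h]

lemma canon_getElem?_none (p : List Bool) (i : ℕ) (h : p.length ≤ i) :
    (canon p)[i]? = none := by
  rw [List.getElem?_eq_none]; rwa [canon_length]

lemma lt_of_getElem?_eq_some {l : List Bool} {i : ℕ} {a : Bool} (h : l[i]? = some a) :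
    i < l.length := by
  rcases List.getElem?_eq_some_iff.1 h with ⟨h', _⟩; exact h'

lemma take_two_eq (l : List Bool) :
    l.take 2 = [false, true] ↔ l[0]? = some false ∧ l[1]? = some true := by
  match l with
  | [] => simp
  | [a] => simp
  | a :: b :: t => simp [List.take]

lemma occursAt_iff (p : List Bool) (i : ℕ) :
    OccursAt [false, true] p i ↔ p[i]? = some false ∧ p[i+1]? = some true := by
  show (p.drop i).take 2 = [false, true] ↔ _
  rw [take_two_eq, List.getElem?_drop, List.getElem?_drop]
  norm_num

lemma canon_false_iff (p : List Bool) (i : ℕ) :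
    (canon p)[i]? = some false ↔ OccursAt [false, true] p i := by
  rw [occursAt_iff]
  by_cases h : i < p.length
  · rw [canon_getElem? p i h]
    by_cases hc : p[i]? = some false ∧ p[i+1]? = some true <;> simp [hc]
  · rw [canon_getElem?_none p i (le_of_not_gt h)]
    constructor
    · intro h'; exact absurd h' (by simp)
    · rintro ⟨h1, -⟩
      exact absurd (lt_of_getElem?_eq_some h1) h

/-- A canonical word: `false` never occurs at position 0 and is always followed by `true`. -/
def Good (q : List Bool) : Prop :=
  ∀ i, q[i]? = some false → 1 ≤ i ∧ q[i+1]? = some true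

lemma canon_good {p : List Bool} (hb : IsBallot p) : Good (canon p) := by
  intro i hi
  rw [canon_false_iff, occursAt_iff] at hi
  obtain ⟨h1, h2⟩ := hi
  constructor
  · by_contra h
    have hi0 : i = 0 := by omega
    subst hi0
    have hlen : 0 < p.length := lt_of_getElem?_eq_some h1
    obtain ⟨a, t, rfl⟩ : ∃ a t, p = a :: t := by
      cases p with
      | nil => simp at hlen
      | cons a t => exact ⟨a, t, rfl⟩
    have ha : a = false := by simpa using h1
    have := hb 1
    simp [ha, List.count_cons] at this
  · have hlt : i + 1 < p.length := lt_of_getElem?_eq_some h2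
    rw [canon_getElem? p (i+1) hlt]
    have : ¬ (p[i+1]? = some false ∧ p[i+2]? = some true) := by
      rintro ⟨hf, -⟩; rw [h2] at hf; simp at hf
    simp [this]

lemma canon_eq_of_equiv {p q : List Bool} (h : PathEquiv [false, true] p q) :
    canon p = canon q := by
  apply List.ext_getElem?
  intro j
  by_cases hj : j < p.length
  · have hj' : j < q.length := h.1 ▸ hj
    rw [canon_getElem? p j hj, canon_getElem? q j hj']
    have := h.2 j
    rw [occursAt_iff, occursAt_iff] at this
    simp only [Option.some.injEq]
    exact congrArg Bool.not (decide_eq_decide.2 this)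
  · rw [canon_getElem?_none p j (le_of_not_gt hj),
        canon_getElem?_none q j (le_of_not_gt (h.1 ▸ hj))]

lemma equiv_of_canon_eq {p q : List Bool} (h : canon p = canon q) :
    PathEquiv [false, true] p q := by
  constructor
  · rw [← canon_length p, ← canon_length q, h]
  · intro i
    rw [← canon_false_iff, ← canon_false_iff, h]

lemma count_true_add_count_false (l : List Bool) :
    l.count true + l.count false = l.length := by
  induction l with
  | nil => simp
  | cons a t ih => cases a <;> simp [List.count_cons] <;> omega

lemma good_key {q : List Bool} (hg : Good q) :
    ∀ k, k ≤ q.length → 2 * (q.take k).count false ≤ k := by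
  intro k
  induction k using Nat.strong_induction_on with
  | _ k ih =>
    intro hk
    match k with
    | 0 => simp
    | (k+1) =>
      have hk' : k < q.length := hk
      have hb : q[k]? = some q[k] := List.getElem?_eq_getElem hk'
      rw [List.take_succ, hb]
      rcases Bool.eq_false_or_eq_true q[k] with hv | hv
      · -- q[k] = true
        rw [hv]
        have := ih k (by omega) (by omega)
        simp [List.count_append]
        omega
      · -- q[k] = false
        obtain ⟨h1, -⟩ := hg k (by rw [hb, hv])
        obtain ⟨m, rfl⟩ : ∃ m, k = m + 1 := ⟨k - 1, by omega⟩
        have hm' : m < q.length := by omega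
        have hmb : q[m]? = some q[m] := List.getElem?_eq_getElem hm'
        have hmt : q[m] = true := by
          by_contra h
          have hf : q[m]? = some false := by rw [hmb]; simp [Bool.eq_false_iff.2 h]
          obtain ⟨-, h2⟩ := hg m hf
          rw [hb, hv] at h2
          simp at h2
        have htk : q.take (m+1) = q.take m ++ [true] := by
          rw [List.take_succ, hmb, hmt]; rfl
        rw [htk, hv]
        have := ih m (by omega) (by omega)
        simp [List.count_append]
        omega

lemma good_ballot {q : List Bool} (hg : Good q) : IsBallot q := by
  intro k
  rcases le_or_gt k q.length with hk | hk
  · have h2 := good_key hg k hk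
    have hlen : (q.take k).length = k := List.length_take_of_le hk
    have := count_true_add_count_false (q.take k)
    omega
  · rw [List.take_of_length_le (le_of_lt hk)]
    have h2 := good_key hg q.length le_rfl
    rw [List.take_length] at h2
    have := count_true_add_count_false q
    omega

lemma canon_good_self {q : List Bool} (hg : Good q) : canon q = q := by
  apply List.ext_getElem?
  intro j
  by_cases hj : j < q.length
  · rw [canon_getElem? q j hj]
    have hb : q[j]? = some q[j] := List.getElem?_eq_getElem hj
    rcases Bool.eq_false_or_eq_true q[j] with hv | hv
    · rw [hb, hv]
      have : ¬ (q[j]? = some false ∧ q[j+1]? = some true) := by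
        rintro ⟨hf, -⟩; rw [hb, hv] at hf; simp at hf
      simp [this]
    · obtain ⟨-, h2⟩ := hg j (by rw [hb, hv])
      rw [hb, hv]
      have : (q[j]? = some false ∧ q[j+1]? = some true) := ⟨by rw [hb, hv], h2⟩
      simp [this]
  · rw [canon_getElem?_none q j (le_of_not_gt hj), List.getElem?_eq_none (le_of_not_gt hj)]

end DUAux

section DUCount

/-- Canonical words of length `n`. -/
abbrev GoodType (n : ℕ) : Type := {q : List Bool // Good q ∧ q.length = n}

lemma finite_subtype_len (P : List Bool → Prop) (n : ℕ) :
    Finite {p : List Bool // P p ∧ p.length = n} := by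
  apply Finite.of_injective (fun p : {p : List Bool // P p ∧ p.length = n} =>
    (fun i : Fin (n+1) => p.1[(i : ℕ)]?))
  intro p q h
  apply Subtype.ext
  apply List.ext_getElem?
  intro j
  rcases lt_or_ge j n with hj | hj
  · have := congrFun h ⟨j, by omega⟩
    simpa using this
  · rw [List.getElem?_eq_none (by rw [p.2.2]; omega),
      List.getElem?_eq_none (by rw [q.2.2]; omega)]

instance (n : ℕ) : Finite (GoodType n) := finite_subtype_len Good n

instance (n : ℕ) : Finite {p : List Bool // IsBallot p ∧ p.length = n} :=
  finite_subtype_len IsBallot n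

/-- The canonicalization map on the quotient. -/
noncomputable def toGood (n : ℕ) : Quotient (ballotSetoid [false, true] n) → GoodType n :=
  Quotient.lift
    (fun p : {p : List Bool // IsBallot p ∧ p.length = n} =>
      (⟨canon p.1, canon_good p.2.1, by rw [canon_length, p.2.2]⟩ : GoodType n))
    (fun p q h => Subtype.ext (canon_eq_of_equiv h))

lemma toGood_bijective (n : ℕ) : Function.Bijective (toGood n) := by
  constructor
  · intro a b
    induction a using Quotient.ind
    induction b using Quotient.ind
    intro h
    exact Quotient.sound (equiv_of_canon_eq (congrArg Subtype.val h))
  · rintro ⟨q, hg, hl⟩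
    exact ⟨Quotient.mk _ ⟨q, good_ballot hg, hl⟩, Subtype.ext (canon_good_self hg)⟩

lemma good_append_true {r : List Bool} (hg : Good r) : Good (r ++ [true]) := by
  intro i hi
  rcases lt_or_ge i r.length with h | h
  · rw [List.getElem?_append_left h] at hi
    obtain ⟨h1, h2⟩ := hg i hi
    refine ⟨h1, ?_⟩
    rw [List.getElem?_append_left (lt_of_getElem?_eq_some h2)]
    exact h2
  · rw [List.getElem?_append_right h] at hi
    rcases eq_or_lt_of_le h with h' | h'
    · rw [← h'] at hi; simp at hi
    · rw [List.getElem?_eq_none (l := [true]) (by simp; omega)] at hi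
      simp at hi

lemma good_append_ft {r : List Bool} (hr : 1 ≤ r.length) (hg : Good r) :
    Good (r ++ [false, true]) := by
  intro i hi
  rcases lt_or_ge i r.length with h | h
  · rw [List.getElem?_append_left h] at hi
    obtain ⟨h1, h2⟩ := hg i hi
    refine ⟨h1, ?_⟩
    rw [List.getElem?_append_left (lt_of_getElem?_eq_some h2)]
    exact h2
  · rcases eq_or_lt_of_le h with h' | h'
    · refine ⟨by omega, ?_⟩
      rw [List.getElem?_append_right (by omega), show i + 1 - r.length = 1 by omega]
      rfl
    · rw [List.getElem?_append_right h] at hi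
      rcases eq_or_lt_of_le (Nat.succ_le_of_lt h') with h'' | h''
      · rw [show i - r.length = 1 by omega] at hi; simp at hi
      · rw [List.getElem?_eq_none (l := [false, true]) (by simp; omega)] at hi
        simp at hi

lemma last_true {q : List Bool} {n : ℕ} (hg : Good q) (hl : q.length = n + 1) :
    q[n]? = some true := by
  have hn : n < q.length := by omega
  have hb : q[n]? = some q[n] := List.getElem?_eq_getElem hn
  rcases Bool.eq_false_or_eq_true q[n] with hv | hv
  · rw [hb, hv]
  · exfalso
    obtain ⟨-, h2⟩ := hg n (by rw [hb, hv])
    have := lt_of_getElem?_eq_some h2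
    omega

lemma good_recur (n : ℕ) (hn : 1 ≤ n) :
    Nat.card (GoodType (n + 2)) = Nat.card (GoodType (n + 1)) + Nat.card (GoodType n) := by
  rw [← Nat.card_sum]
  refine (Nat.card_eq_of_bijective (fun x : GoodType (n+1) ⊕ GoodType n =>
    match x with
      | Sum.inl r => (⟨r.1 ++ [true], good_append_true r.2.1, by simp [r.2.2]⟩ : GoodType (n+2))
      | Sum.inr r => ⟨r.1 ++ [false, true], good_append_ft (by rw [r.2.2]; omega) r.2.1,
          by simp [r.2.2]⟩) ?_).symm
  constructor
  · rintro (⟨r, hr⟩ | ⟨r, hr⟩) (⟨s, hs⟩ | ⟨s, hs⟩) h <;>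
      simp only [Subtype.mk.injEq] at h
    · exact congrArg Sum.inl (Subtype.ext (List.append_cancel_right h))
    · exfalso
      have h1 : (r ++ [true])[n]? = some true := by
        rw [List.getElem?_append_left (by omega)]
        exact last_true hr.1 hr.2
      have h2 : (s ++ [false, true])[n]? = some false := by
        rw [List.getElem?_append_right (by omega), show n - s.length = 0 by omega]
        rfl
      rw [h] at h1
      rw [h1] at h2
      simp at h2
    · exfalso
      have h1 : (s ++ [true])[n]? = some true := by
        rw [List.getElem?_append_left (by omega)]
        exact last_true hs.1 hs.2
      have h2 : (r ++ [false, true])[n]? = some false := by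
        rw [List.getElem?_append_right (by omega), show n - r.length = 0 by omega]
        rfl
      rw [← h] at h1
      rw [h1] at h2
      simp at h2
    · exact congrArg Sum.inr (Subtype.ext (List.append_cancel_right h))
  · rintro ⟨q, hg, hl⟩
    have hlast : q[n+1]? = some true := last_true hg hl
    have hn2 : n < q.length := by omega
    have hb : q[n]? = some q[n] := List.getElem?_eq_getElem hn2
    rcases Bool.eq_false_or_eq_true q[n] with hv | hv
    · -- q[n] = true : comes from inl
      refine ⟨Sum.inl ⟨q.take (n+1), ?_, by rw [List.length_take]; omega⟩, ?_⟩
      · intro i hi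
        have hilt : i < n + 1 := by
          by_contra h
          rw [List.getElem?_eq_none (by rw [List.length_take]; omega)] at hi
          simp at hi
        rw [List.getElem?_take_of_lt hilt] at hi
        obtain ⟨h1, h2⟩ := hg i hi
        refine ⟨h1, ?_⟩
        have : i ≠ n := by rintro rfl; rw [hb, hv] at hi; simp at hi
        rw [List.getElem?_take_of_lt (by omega)]
        exact h2
      · apply Subtype.ext
        apply List.ext_getElem?
        intro j
        show (q.take (n+1) ++ [true])[j]? = q[j]?
        have hlt : (q.take (n+1)).length = n + 1 := by rw [List.length_take]; omega
        rcases lt_or_ge j (n+1) with hj | hj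
        · rw [List.getElem?_append_left (by omega), List.getElem?_take_of_lt hj]
        · rcases eq_or_lt_of_le hj with hj' | hj'
          · subst hj'
            rw [List.getElem?_append_right (by omega), hlt, Nat.sub_self, hlast]
            rfl
          · have e1 : (q.take (n+1) ++ [true])[j]? = none := by
              apply List.getElem?_eq_none
              rw [List.length_append, hlt]
              show n + 1 + 1 ≤ j
              omega
            have e2 : q[j]? = none := List.getElem?_eq_none (by omega)
            rw [e1, e2]
    · -- q[n] = false : comes from inr
      have hfalse : q[n]? = some false := by rw [hb, hv]
      refine ⟨Sum.inr ⟨q.take n, ?_, by rw [List.length_take]; omega⟩, ?_⟩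
      · intro i hi
        have hilt : i < n := by
          by_contra h
          rw [List.getElem?_eq_none (by rw [List.length_take]; omega)] at hi
          simp at hi
        rw [List.getElem?_take_of_lt hilt] at hi
        obtain ⟨h1, h2⟩ := hg i hi
        refine ⟨h1, ?_⟩
        have : i + 1 ≠ n := by
          rintro h'
          rw [h'] at h2
          rw [hfalse] at h2
          simp at h2
        rw [List.getElem?_take_of_lt (by omega)]
        exact h2
      · apply Subtype.ext
        apply List.ext_getElem?
        intro j
        show (q.take n ++ [false, true])[j]? = q[j]?
        have hlt : (q.take n).length = n := by rw [List.length_take]; omega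
        rcases lt_or_ge j n with hj | hj
        · rw [List.getElem?_append_left (by omega), List.getElem?_take_of_lt hj]
        · rcases eq_or_lt_of_le hj with hj' | hj'
          · subst hj'
            rw [List.getElem?_append_right (by omega), hlt, Nat.sub_self, hfalse]
            rfl
          · rcases eq_or_lt_of_le (Nat.succ_le_of_lt hj') with hj'' | hj''
            · have hj3 : j = n + 1 := by omega
              subst hj3
              rw [List.getElem?_append_right (by omega), hlt,
                show n + 1 - n = 1 by omega, hlast]
              rfl
            · have e1 : (q.take n ++ [false, true])[j]? = none := by
                apply List.getElem?_eq_none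
                rw [List.length_append, hlt]
                show n + 2 ≤ j
                omega
              have e2 : q[j]? = none := List.getElem?_eq_none (by omega)
              rw [e1, e2]

lemma good_card_one : Nat.card (GoodType 1) = 1 := by
  have : ∀ x : GoodType 1, x = ⟨[true], by intro i hi; match i with | 0 => simp at hi | (j+1) => simp at hi, rfl⟩ := by
    rintro ⟨q, hg, hl⟩
    apply Subtype.ext
    match q, hl with
    | [b], _ =>
      cases b with
      | false => exact absurd (hg 0 rfl).1 (by omega)
      | true => rfl
  haveI : Unique (GoodType 1) := { default := _, uniq := this }
  exact Nat.card_unique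

lemma good_card_two : Nat.card (GoodType 2) = 1 := by
  have hG : Good [true, true] := by
    intro i hi
    match i with
    | 0 => simp at hi
    | 1 => simp at hi
    | (j+2) => simp at hi
  have : ∀ x : GoodType 2, x = ⟨[true, true], hG, rfl⟩ := by
    rintro ⟨q, hg, hl⟩
    apply Subtype.ext
    match q, hl with
    | [a, b], _ =>
      cases a with
      | false => exact absurd (hg 0 rfl).1 (by omega)
      | true =>
        cases b with
        | false =>
          have := (hg 1 rfl).2
          simp at this
        | true => rfl
  haveI : Unique (GoodType 2) := { default := _, uniq := this }
  exact Nat.card_unique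

lemma good_card (n : ℕ) (hn : 1 ≤ n) : Nat.card (GoodType n) = Nat.fib n := by
  induction n using Nat.strong_induction_on with
  | _ n ih =>
    match n, hn with
    | 1, _ => simpa using good_card_one
    | 2, _ => simpa using good_card_two
    | (m+3), _ =>
      show Nat.card (GoodType ((m+1)+2)) = Nat.fib ((m+1)+2)
      rw [good_recur (m+1) (by omega), Nat.fib_add_two,
        ih ((m+1)+1) (by omega) (by omega), ih (m+1) (by omega) (by omega)]
      omega

end DUCount

/-- the number of DU-equivalence classes of ballot paths of length
`n ≥ 1` is the `n`-th Fibonacci number. -/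
theorem du_classes_ballot (n : ℕ) (hn : 1 ≤ n) :
    numBallotClasses [false, true] n = Nat.fib n := by
  rw [numBallotClasses, Nat.card_eq_of_bijective _ (toGood_bijective n), good_card n hn]
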